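/- Let δ be a regular cardinal and let ⟨P_α : α ≤ δ⟩ be a sequence of partitions of a set A such that P_β refines P_α whenever α ≤ β ≤ δ, the final partition P_δ is the least common refinement of ⟨P_α : α < δ⟩ (i.e., two points lie in the same piece of P_δ if and only if they lie in the same piece of P_α for every α < δ), and |P_δ| < δ. Then the sequence is eventually constant: there exists α < δ such that P_β = P_α for all β with α ≤ β ≤ δ. -/

import Mathlib

universe u

/-- A partition `Q` refines a partition `P` if every piece of `Q` is contained in a
piece of `P`. -/
def Refines {A : Type*} (Q P : Set (Set A)) : Prop :=
  ∀ s ∈ Q, ∃ t ∈ P, s ⊆ t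

/-- Two points lie in the same piece of the partition `P`. -/
def SamePiece {A : Type*} (P : Set (Set A)) (x y : A) : Prop :=
  ∃ s ∈ P, x ∈ s ∧ y ∈ s

lemma mem_of_samePiece {A : Type*} {P : Set (Set A)} (hP : Setoid.IsPartition P)
    {s : Set A} {x y : A} (hs : s ∈ P) (hx : x ∈ s) (h : SamePiece P x y) : y ∈ s := by
  obtain ⟨u, hu, hxu, hyu⟩ := h
  obtain ⟨v, ⟨hv, hxv⟩, hvuniq⟩ := hP.2 x
  have h1 : s = v := hvuniq s ⟨hs, hx⟩
  have h2 : u = v := hvuniq u ⟨hu, hxu⟩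
  rw [h1, ← h2]; exact hyu

lemma samePiece_trans {A : Type*} {P : Set (Set A)} (hP : Setoid.IsPartition P)
    {x y z : A} (h1 : SamePiece P x y) (h2 : SamePiece P y z) : SamePiece P x z := by
  obtain ⟨s, hs, hxs, hys⟩ := h1
  exact ⟨s, hs, hxs, mem_of_samePiece hP hs hys h2⟩

lemma samePiece_symm {A : Type*} {P : Set (Set A)} {x y : A}
    (h : SamePiece P x y) : SamePiece P y x := by
  obtain ⟨s, hs, hx, hy⟩ := h; exact ⟨s, hs, hy, hx⟩

lemma refines_samePiece {A : Type*} {Q P : Set (Set A)} (h : Refines Q P)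
    {x y : A} (hxy : SamePiece Q x y) : SamePiece P x y := by
  obtain ⟨s, hs, hxs, hys⟩ := hxy
  obtain ⟨t, ht, hst⟩ := h s hs
  exact ⟨t, ht, hst hxs, hst hys⟩

lemma partition_subset_of_samePiece {A : Type*} {P Q : Set (Set A)}
    (hP : Setoid.IsPartition P) (hQ : Setoid.IsPartition Q)
    (h : ∀ x y, SamePiece P x y ↔ SamePiece Q x y) : P ⊆ Q := by
  intro s hs
  have hsne : s.Nonempty := Set.nonempty_iff_ne_empty.2 (fun he => hP.1 (he ▸ hs))
  obtain ⟨x, hx⟩ := hsne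
  obtain ⟨t, ⟨ht, hxt⟩, _⟩ := hQ.2 x
  have hst : s = t := by
    ext y
    constructor
    · intro hy
      exact mem_of_samePiece hQ ht hxt ((h x y).mp ⟨s, hs, hx, hy⟩)
    · intro hy
      exact mem_of_samePiece hP hs hx ((h x y).mpr ⟨t, ht, hxt, hy⟩)
  rw [hst]; exact ht

lemma partition_eq_of_samePiece {A : Type*} {P Q : Set (Set A)}
    (hP : Setoid.IsPartition P) (hQ : Setoid.IsPartition Q)
    (h : ∀ x y, SamePiece P x y ↔ SamePiece Q x y) : P = Q :=
  le_antisymm (partition_subset_of_samePiece hP hQ h)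
    (partition_subset_of_samePiece hQ hP (fun x y => (h x y).symm))

/-- If `δ` is regular, `⟨P_α : α ≤ δ⟩` is a ⊆-decreasing (refining) sequence of
partitions of `A` whose last term `P_δ` is the least common refinement of
`⟨P_α : α < δ⟩` and satisfies `|P_δ| < δ`, then the sequence is eventually constant. -/
theorem statement8 {A : Type u} (δ : Cardinal.{u}) (hreg : δ.ord.cof = δ)
    (P : Ordinal.{u} → Set (Set A))
    (hpart : ∀ α ≤ δ.ord, Setoid.IsPartition (P α))
    (hrefine : ∀ α β : Ordinal.{u}, α ≤ β → β ≤ δ.ord → Refines (P β) (P α))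
    (hlcr : ∀ x y : A, SamePiece (P δ.ord) x y ↔ ∀ α < δ.ord, SamePiece (P α) x y)
    (hsize : Cardinal.mk (P δ.ord) < δ) :
    ∃ α < δ.ord, ∀ β : Ordinal.{u}, α ≤ β → β ≤ δ.ord → P β = P α := by
  have hδpos : (0 : Cardinal) < δ := lt_of_le_of_lt zero_le hsize
  have hDpos : (0 : Ordinal) < δ.ord := by
    rw [← Cardinal.ord_zero]
    exact Cardinal.ord_lt_ord.mpr hδpos
  rcases isEmpty_or_nonempty A with hA | hA
  · -- empty case: all partitions are empty
    have hempty : ∀ α, α ≤ δ.ord → P α = ∅ := by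
      intro α hα
      rw [Set.eq_empty_iff_forall_notMem]
      intro s hs
      have : s = ∅ := Set.eq_empty_of_isEmpty s
      exact (hpart α hα).1 (this ▸ hs)
    exact ⟨0, hDpos, fun β _ hβ => by rw [hempty β hβ, hempty 0 (le_of_lt hDpos)]⟩
  · obtain ⟨a0⟩ := hA
    set D := δ.ord with hD
    have hPD : Setoid.IsPartition (P D) := hpart D le_rfl
    -- δ is infinite
    have hδinf : Cardinal.aleph0 ≤ δ := by
      by_contra hfin
      push_neg at hfin
      have hlt : D < Ordinal.omega0 := by
        rw [hD, ← Cardinal.ord_aleph0]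
        exact Cardinal.ord_lt_ord.mpr hfin
      obtain ⟨n, hn⟩ := Ordinal.lt_omega0.mp hlt
      have hn0 : n ≠ 0 := by
        rintro rfl
        simp at hn
        exact absurd hn (ne_of_gt hDpos)
      obtain ⟨m, rfl⟩ := Nat.exists_eq_succ_of_ne_zero hn0
      have hsucc : D = Order.succ (m : Ordinal) := by
        rw [hn]; push_cast; rw [Ordinal.add_one_eq_succ]
      have hcof1 : D.cof = 1 := by rw [hsucc, Ordinal.cof_succ]
      have hδ1 : δ = 1 := by rw [← hreg]; exact hcof1
      have : Cardinal.mk (P D) = 0 := by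
        have := hsize
        rw [hδ1] at this
        exact Cardinal.lt_one_iff_zero.mp this
      have hPDe : IsEmpty (P D) := Cardinal.mk_eq_zero_iff.mp this
      obtain ⟨s, ⟨hs, _⟩, _⟩ := hPD.2 a0
      exact hPDe.false ⟨s, hs⟩
    -- representatives
    have hrep : ∀ s : P D, (s : Set A).Nonempty := fun s =>
      Set.nonempty_iff_ne_empty.2 (fun he => hPD.1 (he ▸ s.2))
    set r : P D → A := fun s => (hrep s).choose with hr
    have hrmem : ∀ s : P D, r s ∈ (s : Set A) := fun s => (hrep s).choose_spec
    -- separation ordinals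
    have key : ∀ p : P D × P D, ∃ α, α < D ∧
        (¬ SamePiece (P D) (r p.1) (r p.2) → ¬ SamePiece (P α) (r p.1) (r p.2)) := by
      intro p
      by_cases hsp : SamePiece (P D) (r p.1) (r p.2)
      · exact ⟨0, hDpos, fun h => absurd hsp h⟩
      · rw [hlcr] at hsp
        push_neg at hsp
        obtain ⟨α, hα, hsep⟩ := hsp
        exact ⟨α, hα, fun _ => hsep⟩
    choose g hgD hgsep using key
    -- sup of g is < D by regularity
    have hcard : Cardinal.mk (P D × P D) < D.cof := by
      rw [hreg]
      simpa [Cardinal.mk_prod, Cardinal.lift_id] using Cardinal.mul_lt_of_lt hδinf hsize hsize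
    have hsup : (⨆ p, g p) < D := Ordinal.iSup_lt_ord hcard hgD
    set α₀ := ⨆ p, g p with hα₀
    have hgle : ∀ p, g p ≤ α₀ := fun p => le_ciSup (Ordinal.bddAbove_range _) p
    refine ⟨α₀, hsup, ?_⟩
    -- first show SamePiece agrees with P D for all β in [α₀, D]
    have hsame : ∀ β, α₀ ≤ β → β ≤ D → ∀ x y, SamePiece (P β) x y ↔ SamePiece (P D) x y := by
      intro β hβ1 hβ2 x y
      have hDtoβ : ∀ u v : A, SamePiece (P D) u v → SamePiece (P β) u v := by
        intro u v huv
        rcases eq_or_lt_of_le hβ2 with h | h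
        · rwa [h]
        · exact (hlcr u v).mp huv β h
      constructor
      · intro hxy
        by_contra hnD
        obtain ⟨s, ⟨hs, hxs⟩, _⟩ := hPD.2 x
        obtain ⟨t, ⟨ht, hyt⟩, _⟩ := hPD.2 y
        set p : P D × P D := (⟨s, hs⟩, ⟨t, ht⟩) with hp
        have hnrs : ¬ SamePiece (P D) (r p.1) (r p.2) := by
          intro hrs
          apply hnD
          have h1 : SamePiece (P D) x (r p.1) := ⟨s, hs, hxs, hrmem p.1⟩
          have h2 : SamePiece (P D) (r p.2) y := ⟨t, ht, hrmem p.2, hyt⟩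
          exact samePiece_trans hPD (samePiece_trans hPD h1 hrs) h2
        have hsepβ : ¬ SamePiece (P β) (r p.1) (r p.2) := by
          intro hrsβ
          exact hgsep p hnrs
            (refines_samePiece (hrefine (g p) β (le_trans (hgle p) hβ1) hβ2) hrsβ)
        apply hsepβ
        have h1 : SamePiece (P β) (r p.1) x := hDtoβ _ _ ⟨s, hs, hrmem p.1, hxs⟩
        have h2 : SamePiece (P β) y (r p.2) := hDtoβ _ _ ⟨t, ht, hyt, hrmem p.2⟩
        exact samePiece_trans (hpart β hβ2) (samePiece_trans (hpart β hβ2) h1 hxy) h2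
      · exact hDtoβ x y
    have hPeq : ∀ β, α₀ ≤ β → β ≤ D → P β = P D := fun β h1 h2 =>
      partition_eq_of_samePiece (hpart β h2) hPD (hsame β h1 h2)
    intro β h1 h2
    rw [hPeq β h1 h2, hPeq α₀ le_rfl (le_of_lt hsup)]
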